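/- Let ι be a finite index type and let S : ι → Set ℕ be a family of pairwise disjoint sets of positive integers. Then for all n ∈ ℕ, B_{n, ⋃_i S_i} = ∑_{k} (n! / ∏_i (k_i)!) · ∏_i B_{k_i, S_i}, where the sum ranges over all functions k : ι → ℕ with ∑_i k_i = n and n!/∏_i (k_i)! is the multinomial coefficient (in Lean: the sum over Finset.piAntidiagonal Finset.univ n of Nat.multinomial times the product of the B_{k_i, S_i}). -/

import Mathlib

open Finset

open scoped Classical

/-- Generalized Bell number `B_{n,S}`: the number of set partitions of `{1,…,n}`
all of whose block sizes lie in `S`. -/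
noncomputable def genB (S : Set ℕ) (n : ℕ) : ℕ :=
  Nat.card {P : Finpartition (Finset.univ : Finset (Fin n)) // ∀ p ∈ P.parts, p.card ∈ S}

section transport

variable {α β : Type*} [DecidableEq α] [DecidableEq β]

/-- Push a finpartition forward along an embedding. -/
def Finpartition.mapEmb (f : α ↪ β) {s : Finset α} (P : Finpartition s) :
    Finpartition (s.map f) where
  parts := P.parts.map ⟨fun p => p.map f, Finset.map_injective f⟩
  supIndep := by
    rw [Finset.supIndep_iff_pairwiseDisjoint]
    intro p hp q hq hpq
    simp only [Finset.coe_map, Set.mem_image, Finset.mem_coe] at hp hq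
    obtain ⟨p', hp', rfl⟩ := hp
    obtain ⟨q', hq', rfl⟩ := hq
    simp only [Function.Embedding.coeFn_mk, Function.onFun, id] at hpq ⊢
    have hne : p' ≠ q' := by rintro rfl; exact hpq rfl
    exact (Finset.disjoint_map f).2 (P.disjoint hp' hq' hne)
  sup_parts := by
    ext x
    simp only [Finset.mem_sup, Finset.mem_map, Function.Embedding.coeFn_mk, id]
    constructor
    · rintro ⟨p, hp, hx⟩
      obtain ⟨p', hp', rfl⟩ := hp
      obtain ⟨a, ha, rfl⟩ := Finset.mem_map.1 hx
      exact ⟨a, by rw [← P.sup_parts]; exact Finset.mem_sup.2 ⟨p', hp', ha⟩, rfl⟩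
    · rintro ⟨a, ha, rfl⟩
      rw [← P.sup_parts] at ha
      obtain ⟨p, hp, hap⟩ := Finset.mem_sup.1 ha
      exact ⟨p.map f, ⟨p, hp, rfl⟩, Finset.mem_map_of_mem f hap⟩
  bot_notMem := by
    intro h
    obtain ⟨p, hp, hbot⟩ := Finset.mem_map.1 h
    have hpe : p = ∅ := Finset.map_eq_empty.1 hbot
    exact P.bot_notMem (by rw [Finset.bot_eq_empty, ← hpe]; exact hp)

variable [Fintype β]

/-- Pull back a finpartition of the image of an embedding from a fintype. -/
noncomputable def Finpartition.pullback (f : β ↪ α) (P : Finpartition ((Finset.univ : Finset β).map f)) :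
    Finpartition (Finset.univ : Finset β) where
  parts := P.parts.image fun p => p.preimage f f.injective.injOn
  supIndep := by
    rw [Finset.supIndep_iff_pairwiseDisjoint]
    intro p hp q hq hpq
    simp only [Finset.coe_image, Set.mem_image, Finset.mem_coe] at hp hq
    obtain ⟨p', hp', rfl⟩ := hp
    obtain ⟨q', hq', rfl⟩ := hq
    have hne : p' ≠ q' := by rintro rfl; exact hpq rfl
    have := P.disjoint hp' hq' hne
    simp only [Function.onFun, id, Finset.disjoint_left, Finset.mem_preimage] at this ⊢
    intro b hb hb'
    exact this hb hb'
  sup_parts := by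
    ext b
    simp only [Finset.mem_sup, Finset.mem_image, Finset.mem_univ, iff_true, id]
    have hb : f b ∈ (Finset.univ : Finset β).map f := Finset.mem_map_of_mem f (Finset.mem_univ b)
    rw [← P.sup_parts] at hb
    obtain ⟨p, hp, hfb⟩ := Finset.mem_sup.1 hb
    exact ⟨p.preimage f f.injective.injOn, ⟨p, hp, rfl⟩, Finset.mem_preimage.2 hfb⟩
  bot_notMem := by
    intro h
    obtain ⟨p, hp, hbot⟩ := Finset.mem_image.1 h
    obtain ⟨x, hx⟩ := P.nonempty_of_mem_parts hp
    have hx' := P.le hp hx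
    obtain ⟨b, _, rfl⟩ := Finset.mem_map.1 hx'
    have : b ∈ p.preimage f f.injective.injOn := Finset.mem_preimage.2 hx
    rw [hbot] at this
    exact absurd this (Finset.notMem_empty b)

set_option linter.unusedSectionVars false in
lemma Finpartition.map_preimage_of_subset {f : β ↪ α} {p : Finset α}
    (hp : p ⊆ (Finset.univ : Finset β).map f) :
    (p.preimage f f.injective.injOn).map f = p := by
  ext x
  simp only [Finset.mem_map, Finset.mem_preimage]
  constructor
  · rintro ⟨b, hb, rfl⟩; exact hb
  · intro hx
    obtain ⟨b, _, rfl⟩ := Finset.mem_map.1 (hp hx)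
    exact ⟨b, hx, rfl⟩

/-- The equivalence between partitions of the image and partitions of the source. -/
noncomputable def Finpartition.pullbackEquiv (f : β ↪ α) :
    Finpartition ((Finset.univ : Finset β).map f) ≃ Finpartition (Finset.univ : Finset β) where
  toFun := Finpartition.pullback f
  invFun := Finpartition.mapEmb f
  left_inv P := by
    ext p
    simp only [Finpartition.mapEmb, Finpartition.pullback, Finset.mem_map, Finset.mem_image]
    constructor
    · rintro ⟨q, hq, rfl⟩
      obtain ⟨r, hr, rfl⟩ := hq
      simp only [Function.Embedding.coeFn_mk]
      rw [Finpartition.map_preimage_of_subset (P.le hr)]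
      exact hr
    · intro hp
      exact ⟨p.preimage f f.injective.injOn, ⟨p, hp, rfl⟩,
        by simp only [Function.Embedding.coeFn_mk]
           rw [Finpartition.map_preimage_of_subset (P.le hp)]⟩
  right_inv P := by
    ext p
    simp only [Finpartition.mapEmb, Finpartition.pullback, Finset.mem_image, Finset.mem_map]
    constructor
    · rintro ⟨q, hq, rfl⟩
      obtain ⟨r, hr, rfl⟩ := hq
      simp only [Function.Embedding.coeFn_mk]
      rw [Finset.preimage_map]
      exact hr
    · intro hp
      exact ⟨p.map f, ⟨p, hp, rfl⟩, Finset.preimage_map f p⟩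

lemma card_preimage_of_subset {f : β ↪ α} {p : Finset α}
    (hp : p ⊆ (Finset.univ : Finset β).map f) :
    (p.preimage f f.injective.injOn).card = p.card := by
  conv_rhs => rw [← Finpartition.map_preimage_of_subset hp]
  rw [Finset.card_map]

/-- The number of `S`-partitions of a finset depends only on its cardinality. -/
lemma card_partitions_eq_genB {α : Type*} [DecidableEq α] (S : Set ℕ) (s : Finset α) :
    Nat.card {P : Finpartition s // ∀ p ∈ P.parts, p.card ∈ S} = genB S s.card := by
  classical
  set m := s.card with hm
  let f : Fin m ↪ α := (s.equivFin.symm.toEmbedding).trans (Function.Embedding.subtype _)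
  have h : (Finset.univ : Finset (Fin m)).map f = s := by
    rw [show f = (s.equivFin.symm.toEmbedding).trans (Function.Embedding.subtype _) from rfl,
      ← Finset.map_map, Finset.map_univ_equiv]
    simp [Finset.univ_eq_attach, Finset.attach_map_val]
  have key : Nat.card {P : Finpartition ((Finset.univ : Finset (Fin m)).map f) //
      ∀ p ∈ P.parts, p.card ∈ S} =
      Nat.card {P : Finpartition (Finset.univ : Finset (Fin m)) // ∀ p ∈ P.parts, p.card ∈ S} := by
    refine Nat.card_congr (Equiv.subtypeEquiv (Finpartition.pullbackEquiv f) fun P => ?_)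
    constructor
    · intro hP q hq
      obtain ⟨p, hp, rfl⟩ := Finset.mem_image.1 hq
      rw [card_preimage_of_subset (P.le hp)]
      exact hP p hp
    · intro hP p hp
      have := hP (p.preimage f f.injective.injOn) (Finset.mem_image.2 ⟨p, hp, rfl⟩)
      rwa [card_preimage_of_subset (P.le hp)] at this
  rw [← h]
  exact key

end transport

section multinomialCount

variable {ι α : Type*} [Fintype ι] [DecidableEq ι] [Fintype α] [DecidableEq α]

lemma card_ordered_partitions (s : Finset ι) :
    ∀ (t : Finset α) (k : ι → ℕ), (∑ i ∈ s, k i = t.card) →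
    Nat.card {A : ι → Finset α // s.sup A = t ∧ (∀ ⦃i j⦄, i ≠ j → Disjoint (A i) (A j)) ∧
      (∀ i ∉ s, A i = ∅) ∧ (∀ i ∈ s, (A i).card = k i)} = Nat.multinomial s k := by
  induction s using Finset.cons_induction with
  | empty =>
    intro t k hk
    rw [Finset.sum_empty] at hk
    have ht : t = ∅ := Finset.card_eq_zero.1 hk.symm
    subst ht
    rw [Nat.multinomial_empty, Nat.card_eq_one_iff_unique]
    refine ⟨⟨fun A B => ?_⟩, ⟨fun _ => ∅, ?_, fun i j _ => disjoint_bot_left,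
      fun i _ => rfl, fun i hi => absurd hi (Finset.notMem_empty i)⟩⟩
    · ext i x
      rw [A.2.2.2.1 i (Finset.notMem_empty i), B.2.2.2.1 i (Finset.notMem_empty i)]
    · simp
  | cons a s' ha ih =>
    intro t k hk
    rw [Finset.sum_cons] at hk
    classical
    rw [Nat.card_eq_fintype_card, Fintype.card_subtype]
    have hmaps : ∀ A ∈ Finset.univ.filter (fun A : ι → Finset α =>
        (Finset.cons a s' ha).sup A = t ∧ (∀ ⦃i j⦄, i ≠ j → Disjoint (A i) (A j)) ∧
        (∀ i ∉ Finset.cons a s' ha, A i = ∅) ∧ (∀ i ∈ Finset.cons a s' ha, (A i).card = k i)),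
        A a ∈ t.powersetCard (k a) := by
      intro A hA
      rw [Finset.mem_filter] at hA
      obtain ⟨-, hsup, -, -, hcard⟩ := hA
      rw [Finset.mem_powersetCard]
      exact ⟨Finset.le_iff_subset.1 (le_of_le_of_eq
        (Finset.le_sup (Finset.mem_cons_self a s')) hsup),
        hcard a (Finset.mem_cons_self a s')⟩
    rw [Finset.card_eq_sum_card_fiberwise hmaps]
    have key : ∀ B ∈ t.powersetCard (k a),
        ((Finset.univ.filter (fun A : ι → Finset α =>
          (Finset.cons a s' ha).sup A = t ∧ (∀ ⦃i j⦄, i ≠ j → Disjoint (A i) (A j)) ∧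
          (∀ i ∉ Finset.cons a s' ha, A i = ∅) ∧
          (∀ i ∈ Finset.cons a s' ha, (A i).card = k i))).filter
            fun A : ι → Finset α => A a = B).card =
        Nat.multinomial s' k := by
      intro B hB
      rw [Finset.mem_powersetCard] at hB
      obtain ⟨hB1, hB2⟩ := hB
      rw [Finset.filter_filter, ← Fintype.card_subtype, ← Nat.card_eq_fintype_card]
      have hIH := ih (t \ B) k (by
        rw [Finset.card_sdiff_of_subset hB1, ← hk, hB2, Nat.add_sub_cancel_left])
      rw [← hIH]
      refine Nat.card_congr ⟨fun x => ⟨fun i => if i = a then ∅ else x.1 i, ?_, ?_, ?_, ?_⟩,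
        fun y => ⟨fun i => if i = a then B else y.1 i, ⟨?_, ?_, ?_, ?_⟩, by simp⟩, ?_, ?_⟩
      · -- forward: s'.sup = t \ B
        obtain ⟨⟨hsup, hd, hoff, hcard⟩, hBa⟩ := x.2
        have hcongr : s'.sup (fun i => if i = a then ∅ else x.1 i) = s'.sup x.1 :=
          Finset.sup_congr rfl (fun i hi => if_neg (fun h : i = a => ha (h ▸ hi)))
        rw [hcongr]
        ext z
        simp only [Finset.mem_sup, Finset.mem_sdiff]
        constructor
        · rintro ⟨i, hi, hz⟩
          have hia : i ≠ a := fun h => ha (h ▸ hi)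
          have hsub : x.1 i ⊆ t := Finset.le_iff_subset.1
            (le_of_le_of_eq (Finset.le_sup (Finset.mem_cons_of_mem hi)) hsup)
          refine ⟨hsub hz, fun hzB => ?_⟩
          have hzA : z ∈ x.1 a := by rw [hBa]; exact hzB
          exact Finset.disjoint_left.1 (hd hia) hz hzA
        · rintro ⟨hzt, hzB⟩
          have hzt' : z ∈ (Finset.cons a s' ha).sup x.1 := by rw [hsup]; exact hzt
          rw [Finset.sup_cons, Finset.sup_eq_union, Finset.mem_union] at hzt'
          rcases hzt' with h | h
          · exact absurd (by rw [← hBa]; exact h) hzB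
          · exact Finset.mem_sup.1 h
      · -- forward: disjointness
        obtain ⟨⟨hsup, hd, hoff, hcard⟩, hBa⟩ := x.2
        intro i j hij
        by_cases hia : i = a
        · simp [hia]
        · by_cases hja : j = a
          · simp [hja]
          · simpa [hia, hja] using hd hij
      · -- forward: off s'
        obtain ⟨⟨hsup, hd, hoff, hcard⟩, hBa⟩ := x.2
        intro i hi
        by_cases hia : i = a
        · simp [hia]
        · simp only [if_neg hia]
          exact hoff i (fun h => (Finset.mem_cons.1 h).elim hia hi)
      · -- forward: cards on s'
        obtain ⟨⟨hsup, hd, hoff, hcard⟩, hBa⟩ := x.2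
        intro i hi
        simp only [if_neg (show i ≠ a from fun h => ha (h ▸ hi))]
        exact hcard i (Finset.mem_cons_of_mem hi)
      · -- backward: sup
        obtain ⟨hsup, hd, hoff, hcard⟩ := y.2
        have hcongr : s'.sup (fun i => if i = a then B else y.1 i) = s'.sup y.1 :=
          Finset.sup_congr rfl (fun i hi => if_neg (fun h : i = a => ha (h ▸ hi)))
        rw [Finset.sup_cons, hcongr, hsup]
        simp only [if_pos rfl]
        rw [Finset.sup_eq_union]
        exact Finset.union_sdiff_of_subset hB1
      · -- backward: disjoint
        obtain ⟨hsup, hd, hoff, hcard⟩ := y.2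
        intro i j hij
        have hBdisj : ∀ l, l ≠ a → Disjoint B (y.1 l) := by
          intro l hl
          by_cases hls : l ∈ s'
          · have hle : y.1 l ≤ t \ B := le_of_le_of_eq (Finset.le_sup hls) hsup
            exact Disjoint.mono_right hle Finset.sdiff_disjoint.symm
          · rw [hoff l hls]; exact disjoint_bot_right
        by_cases hia : i = a
        · have hja : j ≠ a := by rintro rfl; exact hij hia
          simp only [if_pos hia, if_neg hja]
          exact hBdisj j hja
        · simp only [if_neg hia]
          by_cases hja : j = a
          · simp only [if_pos hja]
            exact (hBdisj i hia).symm
          · simp only [if_neg hja]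
            exact hd hij
      · -- backward: off
        obtain ⟨hsup, hd, hoff, hcard⟩ := y.2
        intro i hi
        rw [Finset.mem_cons, not_or] at hi
        simp only [if_neg hi.1]
        exact hoff i hi.2
      · -- backward: cards
        obtain ⟨hsup, hd, hoff, hcard⟩ := y.2
        intro i hi
        by_cases hia : i = a
        · simp only [if_pos hia, hia]
          exact hB2
        · simp only [if_neg hia]
          exact hcard i ((Finset.mem_cons.1 hi).elim (fun h => absurd h hia) id)
      · -- left_inv
        intro x
        have hBa := x.2.2
        apply Subtype.ext
        funext i
        by_cases hia : i = a
        · simp [hia, ← hBa]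
        · simp [hia]
      · -- right_inv
        intro y
        have hoff := y.2.2.2.1
        apply Subtype.ext
        funext i
        by_cases hia : i = a
        · simp only [hia, if_pos]
          exact (hoff a ha).symm
        · simp [hia]
    rw [Finset.sum_congr rfl key, Finset.sum_const, Finset.card_powersetCard, smul_eq_mul,
      Nat.multinomial_cons, ← hk]

end multinomialCount

section main

variable {ι : Type*} [Fintype ι] [DecidableEq ι]

/-- Ordered covers of `Fin n` by pairwise disjoint (possibly empty) finsets. -/
abbrev OrdCover (ι : Type*) [Fintype ι] (n : ℕ) :=
  {A : ι → Finset (Fin n) // Finset.univ.sup A = Finset.univ ∧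
    ∀ ⦃i j⦄, i ≠ j → Disjoint (A i) (A j)}

/-- Colored partitions: an ordered cover plus a partition of each piece with sizes in `S i`. -/
abbrev ColPart (S : ι → Set ℕ) (n : ℕ) :=
  Σ A : OrdCover ι n, ∀ i, {Q : Finpartition (A.1 i) // ∀ p ∈ Q.parts, p.card ∈ S i}

/-- Glue a colored partition into a single partition of `Fin n`. -/
noncomputable def glue (S : ι → Set ℕ) (n : ℕ) (x : ColPart S n) :
    {P : Finpartition (Finset.univ : Finset (Fin n)) // ∀ p ∈ P.parts, p.card ∈ ⋃ i, S i} := by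
  refine ⟨⟨Finset.univ.biUnion (fun i => (x.2 i).1.parts), ?_, ?_, ?_⟩, ?_⟩
  · rw [Finset.supIndep_iff_pairwiseDisjoint]
    intro p hp q hq hpq
    rw [Finset.mem_coe, Finset.mem_biUnion] at hp hq
    obtain ⟨i, -, hp⟩ := hp
    obtain ⟨j, -, hq⟩ := hq
    rcases eq_or_ne i j with rfl | hij
    · exact (x.2 i).1.disjoint hp hq hpq
    · exact (x.1.2.2 hij).mono ((x.2 i).1.le hp) ((x.2 j).1.le hq)
  · rw [Finset.sup_biUnion]
    rw [Finset.sup_congr rfl (fun i _ => (x.2 i).1.sup_parts)]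
    exact x.1.2.1
  · intro h
    obtain ⟨i, -, h⟩ := Finset.mem_biUnion.1 h
    exact (x.2 i).1.bot_notMem h
  · intro p hp
    obtain ⟨i, -, hp⟩ := Finset.mem_biUnion.1 hp
    exact Set.mem_iUnion.2 ⟨i, (x.2 i).2 p hp⟩

lemma glue_bijective (S : ι → Set ℕ)
    (hdisj : Pairwise fun i j => Disjoint (S i) (S j)) (n : ℕ) :
    Function.Bijective (glue S n) := by
  classical
  constructor
  · rintro ⟨⟨A, hA⟩, Q⟩ ⟨⟨A', hA'⟩, Q'⟩ h
    have hparts : Finset.univ.biUnion (fun i => (Q i).1.parts) =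
        Finset.univ.biUnion (fun i => (Q' i).1.parts) :=
      congrArg (fun z => (Subtype.val z).parts) h
    have hQ : ∀ i, (Q i).1.parts = (Q' i).1.parts := by
      intro i
      ext p
      constructor
      · intro hp
        have hp' : p ∈ Finset.univ.biUnion (fun j => (Q' j).1.parts) := by
          rw [← hparts]; exact Finset.mem_biUnion.2 ⟨i, Finset.mem_univ i, hp⟩
        obtain ⟨j, -, hpj⟩ := Finset.mem_biUnion.1 hp'
        rcases eq_or_ne i j with rfl | hij
        · exact hpj
        · exact absurd ((Q' j).2 p hpj) (Set.disjoint_left.1 (hdisj hij) ((Q i).2 p hp))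
      · intro hp
        have hp' : p ∈ Finset.univ.biUnion (fun j => (Q j).1.parts) := by
          rw [hparts]; exact Finset.mem_biUnion.2 ⟨i, Finset.mem_univ i, hp⟩
        obtain ⟨j, -, hpj⟩ := Finset.mem_biUnion.1 hp'
        rcases eq_or_ne i j with rfl | hij
        · exact hpj
        · exact absurd ((Q j).2 p hpj) (Set.disjoint_left.1 (hdisj hij) ((Q' i).2 p hp))
    obtain rfl : A = A' := by
      funext i
      have e1 := (Q i).1.sup_parts
      have e2 := (Q' i).1.sup_parts
      rw [hQ i] at e1
      exact e1.symm.trans e2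
    have hQeq : Q = Q' := by
      funext i
      exact Subtype.ext (Finpartition.ext (hQ i))
    exact congrArg (fun Q => (⟨⟨A, hA⟩, Q⟩ : ColPart S n)) hQeq
  · rintro ⟨P, hP⟩
    set A : ι → Finset (Fin n) := fun i => (P.parts.filter fun p => p.card ∈ S i).sup id with hAdef
    have hfilt : ∀ i p, p ∈ P.parts.filter (fun p => p.card ∈ S i) ↔
        p ∈ P.parts ∧ p.card ∈ S i := fun i p => Finset.mem_filter
    have hA1 : Finset.univ.sup A = Finset.univ := by
      apply le_antisymm
      · exact Finset.sup_le fun i _ => Finset.sup_le fun p _ =>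
          Finset.le_iff_subset.2 (Finset.subset_univ p)
      · rw [Finset.le_iff_subset]
        intro z _
        obtain ⟨p, hp, hzp⟩ := P.exists_mem (Finset.mem_univ z)
        obtain ⟨i, hi⟩ := Set.mem_iUnion.1 (hP p hp)
        have hzA : z ∈ A i := Finset.mem_sup.2 ⟨p, (hfilt i p).2 ⟨hp, hi⟩, hzp⟩
        exact (Finset.le_iff_subset.1 (Finset.le_sup (Finset.mem_univ i))) hzA
    have hA2 : ∀ ⦃i j⦄, i ≠ j → Disjoint (A i) (A j) := by
      intro i j hij
      rw [Finset.disjoint_left]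
      intro z hzi hzj
      obtain ⟨p, hpi, hzp⟩ := Finset.mem_sup.1 hzi
      obtain ⟨q, hqj, hzq⟩ := Finset.mem_sup.1 hzj
      obtain ⟨hp, hpS⟩ := (hfilt i p).1 hpi
      obtain ⟨hq, hqS⟩ := (hfilt j q).1 hqj
      have hpq : p ≠ q := by
        rintro rfl
        exact Set.disjoint_left.1 (hdisj hij) hpS hqS
      exact Finset.disjoint_left.1 (P.disjoint hp hq hpq) hzp hzq
    refine ⟨⟨⟨A, hA1, hA2⟩, fun i => ⟨⟨P.parts.filter (fun p => p.card ∈ S i),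
      P.supIndep.subset (Finset.filter_subset _ _), rfl,
      fun h => P.bot_notMem (Finset.filter_subset _ _ h)⟩,
      fun p hp => ((hfilt i p).1 hp).2⟩⟩, ?_⟩
    apply Subtype.ext
    apply Finpartition.ext
    show Finset.univ.biUnion (fun i => P.parts.filter (fun p => p.card ∈ S i)) = P.parts
    ext p
    constructor
    · intro hp
      obtain ⟨i, -, hp⟩ := Finset.mem_biUnion.1 hp
      exact Finset.filter_subset _ _ hp
    · intro hp
      obtain ⟨i, hi⟩ := Set.mem_iUnion.1 (hP p hp)
      exact Finset.mem_biUnion.2 ⟨i, Finset.mem_univ i, (hfilt i p).2 ⟨hp, hi⟩⟩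

end main

theorem statement18 {ι : Type*} [Fintype ι] [DecidableEq ι] (S : ι → Set ℕ)
    (hS : ∀ i, 0 ∉ S i) (hdisj : Pairwise fun i j => Disjoint (S i) (S j)) (n : ℕ) :
    genB (⋃ i, S i) n =
      ∑ k ∈ Finset.piAntidiag (Finset.univ : Finset ι) n,
        Nat.multinomial Finset.univ k * ∏ i, genB (S i) (k i) := by
  classical
  have h1 : genB (⋃ i, S i) n = Nat.card (ColPart S n) :=
    (Nat.card_congr (Equiv.ofBijective _ (glue_bijective S hdisj n))).symm
  rw [h1]
  have h2 : Nat.card (ColPart S n) = ∑ A : OrdCover ι n, ∏ i, genB (S i) ((A.1 i).card) := by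
    rw [Nat.card_eq_fintype_card, Fintype.card_sigma]
    refine Finset.sum_congr rfl fun A _ => ?_
    rw [← Nat.card_eq_fintype_card, Nat.card_pi]
    exact Finset.prod_congr rfl fun i _ => card_partitions_eq_genB (S i) (A.1 i)
  rw [h2]
  have hsum : ∀ A : OrdCover ι n, ∑ i, (A.1 i).card = n := by
    intro A
    have hbi : (Finset.univ.biUnion A.1).card = ∑ i, (A.1 i).card :=
      Finset.card_biUnion (fun i _ j _ hij => A.2.2 hij)
    rw [← Finset.sup_eq_biUnion, A.2.1] at hbi
    rw [← hbi, Finset.card_univ, Fintype.card_fin]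
  have hmaps : ∀ A ∈ (Finset.univ : Finset (OrdCover ι n)),
      (fun i => ((A.1 : ι → Finset (Fin n)) i).card) ∈
        Finset.piAntidiag (Finset.univ : Finset ι) n := by
    intro A _
    rw [Finset.mem_piAntidiag]
    exact ⟨hsum A, fun i _ => Finset.mem_univ i⟩
  rw [← Finset.sum_fiberwise_of_maps_to hmaps (fun A => ∏ i, genB (S i) ((A.1 i).card))]
  refine Finset.sum_congr rfl fun k hk => ?_
  have hconst : ∀ A ∈ Finset.univ.filter
      (fun A : OrdCover ι n => (fun i => ((A.1 : ι → Finset (Fin n)) i).card) = k),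
      ∏ i, genB (S i) ((A.1 i).card) = ∏ i, genB (S i) (k i) := by
    intro A hA
    refine Finset.prod_congr rfl fun i _ => ?_
    rw [congrFun (Finset.mem_filter.1 hA).2 i]
  rw [Finset.sum_congr rfl hconst, Finset.sum_const, smul_eq_mul]
  congr 1
  -- fiber cardinality = multinomial
  rw [Finset.mem_piAntidiag] at hk
  have hcard : (Finset.univ.filter
      (fun A : OrdCover ι n => (fun i => ((A.1 : ι → Finset (Fin n)) i).card) = k)).card =
      Nat.card {A : OrdCover ι n // (fun i => ((A.1 : ι → Finset (Fin n)) i).card) = k} := by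
    rw [Nat.card_eq_fintype_card, Fintype.card_subtype]
  rw [hcard]
  have hequiv : {A : OrdCover ι n // (fun i => ((A.1 : ι → Finset (Fin n)) i).card) = k} ≃
      {A : ι → Finset (Fin n) // Finset.univ.sup A = Finset.univ ∧
        (∀ ⦃i j⦄, i ≠ j → Disjoint (A i) (A j)) ∧
        (∀ i ∉ (Finset.univ : Finset ι), A i = ∅) ∧
        (∀ i ∈ (Finset.univ : Finset ι), (A i).card = k i)} :=
    { toFun := fun x => ⟨x.1.1, x.1.2.1, x.1.2.2,
        fun i hi => absurd (Finset.mem_univ i) hi, fun i _ => congrFun x.2 i⟩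
      invFun := fun y => ⟨⟨y.1, y.2.1, y.2.2.1⟩, funext fun i => y.2.2.2.2 i (Finset.mem_univ i)⟩
      left_inv := fun x => Subtype.ext rfl
      right_inv := fun y => Subtype.ext rfl }
  rw [Nat.card_congr hequiv]
  exact card_ordered_partitions Finset.univ Finset.univ k
    (by rw [Finset.card_univ, Fintype.card_fin]; exact hk.1)
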